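/- arXiv:1709.08158 — 2 statements merged into one kernel-verified Lean document; each statement's English description precedes it below -/
import Mathlib

section
/- Let N ∈ ℕ^d, let ξ^1,…,ξ^m ∈ 𝕋^d be knots and w_1,…,w_m ≥ 0 be weights such that Σ_{ν=1}^m w_ν f(ξ^ν) = (2π)^{-d} ∫_{𝕋^d} f(x) dx for every trigonometric polynomial f ∈ 𝒯(3N). Then there exist constants C_1(d), C_2(d) > 0 depending only on d such that for every 1 ≤ q ≤ ∞ and every f ∈ 𝒯(N): C_1(d) ‖f‖_q ≤ (Σ_{ν=1}^m w_ν |f(ξ^ν)|^q)^{1/q} ≤ C_2(d) ‖f‖_q, where for q = ∞ the middle quantity is interpreted as max over ν with w_ν > 0 of |f(ξ^ν)|. -/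
open MeasureTheory

/-- The cube `[0,2π]^d` representing the torus `𝕋^d`. -/
def torusCube (d : ℕ) : Set (Fin d → ℝ) :=
  Set.univ.pi fun _ => Set.Icc (0 : ℝ) (2 * Real.pi)

/-- `f ∈ 𝒯(N)`: a trigonometric polynomial with frequencies `k ∈ ℤ^d`, `|k_j| ≤ N_j`. -/
def IsTrigPoly {d : ℕ} (N : Fin d → ℕ) (f : (Fin d → ℝ) → ℂ) : Prop :=
  ∃ c : (Fin d → ℤ) → ℂ,
    f = fun x => ∑ k ∈ Finset.Icc (fun j => -(N j : ℤ)) (fun j => (N j : ℤ)),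
      c k * Complex.exp (Complex.I * ((∑ j, (k j : ℝ) * x j : ℝ) : ℂ))

/-- The `L_q` norm (finite `q`) w.r.t. the normalized Lebesgue measure `(2π)^{-d} dx`. -/
noncomputable def LqNorm (d : ℕ) (q : ℝ) (f : (Fin d → ℝ) → ℂ) : ℝ :=
  (((2 * Real.pi) ^ d)⁻¹ * ∫ x in torusCube d, ‖f x‖ ^ q) ^ (1 / q)

/-- The sup norm on `𝕋^d`. -/
noncomputable def supNorm (d : ℕ) (f : (Fin d → ℝ) → ℂ) : ℝ :=
  sSup {r : ℝ | ∃ x ∈ torusCube d, r = ‖f x‖}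

namespace WM

noncomputable section
open Complex Finset

/-- one dimensional exponential -/
def e1 (k : ℤ) (s : ℝ) : ℂ := Complex.exp (Complex.I * (k : ℂ) * (s : ℂ))

/-- multivariate exponential, matching `IsTrigPoly`'s format -/
def E {d : ℕ} (k : Fin d → ℤ) (x : Fin d → ℝ) : ℂ :=
  Complex.exp (Complex.I * ((∑ j, (k j : ℝ) * x j : ℝ) : ℂ))

variable {d : ℕ}

lemma E_eq_prod (k : Fin d → ℤ) (x : Fin d → ℝ) : E k x = ∏ j, e1 (k j) (x j) := by
  unfold E e1
  rw [← Complex.exp_sum]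
  congr 1
  push_cast
  rw [Finset.mul_sum]
  exact Finset.sum_congr rfl fun j _ => by ring

lemma e1_mul (a b : ℤ) (s : ℝ) : e1 a s * e1 b s = e1 (a + b) s := by
  unfold e1; rw [← Complex.exp_add]; congr 1; push_cast; ring

lemma E_mul (k l : Fin d → ℤ) (x : Fin d → ℝ) : E k x * E l x = E (k + l) x := by
  unfold E; rw [← Complex.exp_add]; congr 1; push_cast
  rw [Finset.mul_sum, Finset.mul_sum, Finset.mul_sum, ← Finset.sum_add_distrib]
  exact Finset.sum_congr rfl fun j _ => by simp only [Pi.add_apply]; push_cast; ring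

lemma E_zero (x : Fin d → ℝ) : E 0 x = 1 := by simp [E]

lemma E_sub (k : Fin d → ℤ) (x y : Fin d → ℝ) : E k (x - y) = E k x * E (-k) y := by
  unfold E; rw [← Complex.exp_add]; congr 1; push_cast
  rw [Finset.mul_sum, Finset.mul_sum, Finset.mul_sum, ← Finset.sum_add_distrib]
  refine Finset.sum_congr rfl fun j _ => ?_
  simp only [Pi.sub_apply, Pi.neg_apply]
  push_cast
  ring

lemma continuous_e1 (k : ℤ) : Continuous (e1 k) := by
  unfold e1; fun_prop

lemma continuous_E (k : Fin d → ℤ) : Continuous (E k) := by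
  unfold E
  apply Complex.continuous_exp.comp
  apply continuous_const.mul
  apply Complex.continuous_ofReal.comp
  exact continuous_finset_sum _ fun j _ => continuous_const.mul (continuous_apply j)

lemma isCompact_torusCube : IsCompact (torusCube d) :=
  isCompact_univ_pi fun _ => isCompact_Icc

lemma measurableSet_torusCube : MeasurableSet (torusCube d) :=
  MeasurableSet.univ_pi fun _ => measurableSet_Icc

lemma integral_e1 (k : ℤ) :
    ∫ s in Set.Icc (0:ℝ) (2 * Real.pi), e1 k s =
      if k = 0 then ((2 * Real.pi : ℝ) : ℂ) else 0 := by
  have h2π : (0:ℝ) ≤ 2 * Real.pi := by positivity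
  rw [integral_Icc_eq_integral_Ioc, ← intervalIntegral.integral_of_le h2π]
  by_cases hk : k = 0
  · subst hk
    simp [e1]
  · have hc : (Complex.I * (k:ℂ)) ≠ 0 := by
      simp [Complex.I_ne_zero, hk]
    have : ∀ s : ℝ, e1 k s = Complex.exp ((Complex.I * (k:ℂ)) * (s:ℂ)) := fun s => by
      unfold e1; ring_nf
    simp_rw [this]
    rw [integral_exp_mul_complex hc]
    have h1 : Complex.exp (Complex.I * (k:ℂ) * ((2 * Real.pi : ℝ):ℂ)) = 1 := by
      have := Complex.exp_int_mul_two_pi_mul_I k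
      rw [← this]; congr 1; push_cast; ring
    rw [h1]
    simp [hk]

lemma indicator_cube_prod (k : Fin d → ℤ) (x : Fin d → ℝ) :
    Set.indicator (torusCube d) (E k) x =
      ∏ j, Set.indicator (Set.Icc (0:ℝ) (2 * Real.pi)) (fun s => e1 (k j) s) (x j) := by
  by_cases hx : x ∈ torusCube d
  · rw [Set.indicator_of_mem hx, E_eq_prod]
    refine Finset.prod_congr rfl fun j _ => ?_
    rw [Set.indicator_of_mem]
    exact hx j (Set.mem_univ j)
  · rw [Set.indicator_of_notMem hx]
    obtain ⟨j, -, hj⟩ : ∃ j ∈ Finset.univ, x j ∉ Set.Icc (0:ℝ) (2 * Real.pi) := by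
      by_contra h
      push_neg at h
      exact hx fun j _ => h j (Finset.mem_univ j)
    exact (Finset.prod_eq_zero (Finset.mem_univ j)
      (by rw [Set.indicator_of_notMem hj])).symm

lemma integral_E (k : Fin d → ℤ) :
    ∫ x in torusCube d, E k x =
      if k = 0 then (((2 * Real.pi) ^ d : ℝ) : ℂ) else 0 := by
  rw [← MeasureTheory.integral_indicator measurableSet_torusCube]
  have : ∀ x, Set.indicator (torusCube d) (E k) x =
      ∏ j, Set.indicator (Set.Icc (0:ℝ) (2 * Real.pi)) (fun s => e1 (k j) s) (x j) :=
    indicator_cube_prod k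
  simp_rw [this]
  rw [MeasureTheory.integral_fintype_prod_volume_eq_prod
    (f := fun (j : Fin d) (s : ℝ) => Set.indicator (Set.Icc (0:ℝ) (2 * Real.pi)) (fun s => e1 (k j) s) s)]
  have h1 : ∀ j, (∫ s : ℝ, Set.indicator (Set.Icc (0:ℝ) (2 * Real.pi)) (fun s => e1 (k j) s) s)
      = if k j = 0 then ((2 * Real.pi : ℝ) : ℂ) else 0 := fun j => by
    rw [MeasureTheory.integral_indicator measurableSet_Icc, integral_e1]
  simp_rw [h1]
  by_cases hk : k = 0
  · subst hk
    simp
  · obtain ⟨j, hj⟩ : ∃ j, k j ≠ 0 := by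
      by_contra h
      push_neg at h
      exact hk (funext h)
    rw [if_neg hk]
    exact Finset.prod_eq_zero (Finset.mem_univ j) (by rw [if_neg hj])

/-- normalized complex integral over the cube -/
def In (d : ℕ) (g : (Fin d → ℝ) → ℂ) : ℂ :=
  (((2 * Real.pi) ^ d : ℝ) : ℂ)⁻¹ * ∫ x in torusCube d, g x

/-- normalized real integral over the cube -/
def InR (d : ℕ) (g : (Fin d → ℝ) → ℝ) : ℝ :=
  (((2 * Real.pi) ^ d : ℝ))⁻¹ * ∫ x in torusCube d, g x

lemma twopipow_pos : (0:ℝ) < (2 * Real.pi) ^ d := by positivity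

lemma In_E (k : Fin d → ℤ) : In d (E k) = if k = 0 then 1 else 0 := by
  unfold In
  rw [integral_E]
  by_cases hk : k = 0 <;> simp [hk]

lemma integrableOn_continuous {g : (Fin d → ℝ) → ℂ} (hg : Continuous g) :
    IntegrableOn g (torusCube d) :=
  hg.continuousOn.integrableOn_compact isCompact_torusCube

lemma integrableOn_continuousR {g : (Fin d → ℝ) → ℝ} (hg : Continuous g) :
    IntegrableOn g (torusCube d) :=
  hg.continuousOn.integrableOn_compact isCompact_torusCube

lemma In_sum {α : Type*} (s : Finset α) (φ : α → ℂ) (κ : α → Fin d → ℤ) :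
    In d (fun x => ∑ a ∈ s, φ a * E (κ a) x) =
      ∑ a ∈ s.filter (fun a => κ a = 0), φ a := by
  unfold In
  beta_reduce
  rw [MeasureTheory.integral_finset_sum _
    (fun a _ => (integrableOn_continuous (g := fun x => φ a * E (κ a) x) (continuous_const.mul (continuous_E (κ a)))))]
  simp_rw [MeasureTheory.integral_const_mul]
  rw [Finset.mul_sum, Finset.sum_filter]
  refine Finset.sum_congr rfl fun a _ => ?_
  have h2 := In_E (d := d) (κ a)
  unfold In at h2
  rw [mul_left_comm, h2]
  by_cases h : κ a = 0 <;> simp [h]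

lemma isTrigPoly_sum {α : Type*} (M : Fin d → ℕ) (s : Finset α) (φ : α → ℂ)
    (κ : α → Fin d → ℤ)
    (hκ : ∀ a ∈ s, κ a ∈ Finset.Icc (fun j => -(M j : ℤ)) (fun j => (M j : ℤ))) :
    IsTrigPoly M (fun x => ∑ a ∈ s, φ a * E (κ a) x) := by
  refine ⟨fun k => ∑ a ∈ s.filter (fun a => κ a = k), φ a, ?_⟩
  funext x
  rw [← Finset.sum_fiberwise_of_maps_to hκ (fun a => φ a * E (κ a) x)]
  refine Finset.sum_congr rfl fun k _ => ?_
  rw [Finset.sum_mul]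
  refine Finset.sum_congr rfl fun a ha => ?_
  rw [Finset.mem_filter] at ha
  rw [ha.2]
  rfl

/-! ### one-dimensional kernels -/

/-- Dirichlet-type sum -/
def dker (n : ℕ) (s : ℝ) : ℂ := ∑ l ∈ Finset.range n, e1 (l : ℤ) s

/-- Fejér kernel (real-valued, nonnegative) -/
def fejR (n : ℕ) (s : ℝ) : ℝ := Complex.normSq (dker n s) / n

/-- 1D majorant kernel -/
def MkR (n : ℕ) (s : ℝ) : ℝ := 2 * fejR (2 * n) s + fejR n s

/-- 1D de la Vallée Poussin kernel -/
def VkR (n : ℕ) (s : ℝ) : ℝ := 2 * fejR (2 * n) s - fejR n s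

lemma fejR_nonneg (n : ℕ) (s : ℝ) : 0 ≤ fejR n s :=
  div_nonneg (Complex.normSq_nonneg _) (Nat.cast_nonneg n)

lemma MkR_nonneg (n : ℕ) (s : ℝ) : 0 ≤ MkR n s := by
  unfold MkR
  have := fejR_nonneg (2 * n) s
  have := fejR_nonneg n s
  linarith

lemma abs_VkR_le (n : ℕ) (s : ℝ) : |VkR n s| ≤ MkR n s := by
  unfold VkR MkR
  have := fejR_nonneg (2 * n) s
  have := fejR_nonneg n s
  rw [abs_le]; constructor <;> linarith

lemma continuous_dker (n : ℕ) : Continuous (dker n) :=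
  continuous_finset_sum _ fun l _ => continuous_e1 _

lemma continuous_fejR (n : ℕ) : Continuous (fejR n) :=
  (Complex.continuous_normSq.comp (continuous_dker n)).div_const _

lemma continuous_MkR (n : ℕ) : Continuous (MkR n) :=
  ((continuous_const.mul (continuous_fejR _)).add (continuous_fejR n))

lemma continuous_VkR (n : ℕ) : Continuous (VkR n) :=
  ((continuous_const.mul (continuous_fejR _)).sub (continuous_fejR n))

/-- counting lemma for Fejér coefficients -/
lemma card_pairs (n : ℕ) (k : ℤ) :
    ((Finset.range n ×ˢ Finset.range n).filter
      (fun p => (p.1 : ℤ) - (p.2 : ℤ) = k)).card = n - k.natAbs := by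
  rw [← Finset.card_range (n - k.natAbs)]
  apply Finset.card_nbij' (i := fun p => min p.1 p.2)
    (j := fun r => (r + k.toNat, r + (-k).toNat))
  · intro p hp
    simp only [Finset.mem_coe, Finset.mem_filter, Finset.mem_product, Finset.mem_range] at hp ⊢
    omega
  · intro r hr
    simp only [Finset.mem_coe, Finset.mem_filter, Finset.mem_product, Finset.mem_range] at hr ⊢
    omega
  · intro p hp
    simp only [Finset.mem_coe, Finset.mem_filter, Finset.mem_product, Finset.mem_range] at hp
    ext <;> simp <;> omega
  · intro r hr
    simp only [Finset.mem_coe, Finset.mem_range] at hr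
    simp
    omega

/-- Fejér coefficient -/
def fc (n : ℕ) (k : ℤ) : ℂ := ((n - k.natAbs : ℕ) : ℂ) / (n : ℂ)

lemma fc_zero (n : ℕ) (hn : 0 < n) : fc n 0 = 1 := by
  unfold fc
  simp only [Int.natAbs_zero, Nat.sub_zero]
  rw [div_self]
  exact_mod_cast hn.ne'

lemma fc_eq_zero {n : ℕ} {k : ℤ} (h : (n:ℤ) ≤ |k|) : fc n k = 0 := by
  unfold fc
  rw [Int.abs_eq_natAbs] at h
  have h2 : n - k.natAbs = 0 := by omega
  rw [h2]
  simp

lemma fejR_expand (n : ℕ) (s : ℝ) :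
    ((fejR n s : ℝ) : ℂ) = ∑ k ∈ Finset.Icc (-(n:ℤ)) (n:ℤ), fc n k * e1 k s := by
  unfold fejR fc
  have hconj : (starRingEnd ℂ) (dker n s) = ∑ l ∈ Finset.range n, e1 (-(l:ℤ)) s := by
    unfold dker
    rw [map_sum]
    refine Finset.sum_congr rfl fun l _ => ?_
    unfold e1
    rw [← Complex.exp_conj]
    congr 1
    simp [Complex.conj_ofReal]
  have hsq : ((Complex.normSq (dker n s) : ℝ) : ℂ) = dker n s * (starRingEnd ℂ) (dker n s) := by
    rw [Complex.mul_conj]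
  rw [Complex.ofReal_div]
  rw [hsq, hconj]
  unfold dker
  rw [Finset.sum_mul_sum]
  have hterm : ∀ p : ℕ × ℕ, e1 (p.1 : ℤ) s * e1 (-(p.2:ℤ)) s = e1 ((p.1:ℤ) - (p.2:ℤ)) s := by
    intro p
    rw [e1_mul]
    congr 1
  have : (∑ l ∈ Finset.range n, ∑ l' ∈ Finset.range n, e1 (l:ℤ) s * e1 (-(l':ℤ)) s)
      = ∑ p ∈ Finset.range n ×ˢ Finset.range n, e1 ((p.1:ℤ) - (p.2:ℤ)) s := by
    rw [Finset.sum_product]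
    exact Finset.sum_congr rfl fun l _ => Finset.sum_congr rfl fun l' _ => hterm (l, l')
  rw [this]
  rw [← Finset.sum_fiberwise_of_maps_to (g := fun p : ℕ × ℕ => (p.1:ℤ) - (p.2:ℤ))
    (t := Finset.Icc (-(n:ℤ)) (n:ℤ))
    (fun p hp => by
      simp only [Finset.mem_product, Finset.mem_range] at hp
      simp only [Finset.mem_Icc]
      omega)]
  rw [Finset.sum_div]
  refine Finset.sum_congr rfl fun k _ => ?_
  have hsum : ∑ p ∈ (Finset.range n ×ˢ Finset.range n).filter (fun p => (p.1:ℤ) - (p.2:ℤ) = k),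
      e1 ((p.1:ℤ) - (p.2:ℤ)) s = ((n - k.natAbs : ℕ) : ℂ) * e1 k s := by
    calc ∑ p ∈ (Finset.range n ×ˢ Finset.range n).filter (fun p => (p.1:ℤ) - (p.2:ℤ) = k),
        e1 ((p.1:ℤ) - (p.2:ℤ)) s
        = ∑ _p ∈ (Finset.range n ×ˢ Finset.range n).filter (fun p => (p.1:ℤ) - (p.2:ℤ) = k),
          e1 k s :=
        Finset.sum_congr rfl (fun p hp => by rw [(Finset.mem_filter.mp hp).2])
      _ = ((Finset.range n ×ˢ Finset.range n).filter
            (fun p => (p.1:ℤ) - (p.2:ℤ) = k)).card • e1 k s := Finset.sum_const _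
      _ = ((n - k.natAbs : ℕ) : ℂ) * e1 k s := by rw [card_pairs]; simp [nsmul_eq_mul]
  rw [hsum]
  push_cast
  ring

/-- de la Vallée Poussin coefficient -/
def vc (n : ℕ) (k : ℤ) : ℂ := 2 * fc (2 * n) k - fc n k

/-- majorant coefficient -/
def mc (n : ℕ) (k : ℤ) : ℂ := 2 * fc (2 * n) k + fc n k

lemma mc_zero {n : ℕ} (hn : 0 < n) : mc n 0 = 3 := by
  unfold mc
  rw [fc_zero n hn, fc_zero (2 * n) (by omega)]
  norm_num

lemma vc_eq_one {n : ℕ} {k : ℤ} (hn : 0 < n) (hk : k.natAbs ≤ n) : vc n k = 1 := by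
  unfold vc fc
  have h1 : k.natAbs ≤ 2 * n := by omega
  have hn' : ((n:ℝ):ℂ) ≠ 0 := by exact_mod_cast (Nat.cast_pos.mpr hn).ne'
  have hn2 : (n:ℂ) ≠ 0 := by exact_mod_cast hn.ne'
  push_cast [Nat.cast_sub hk, Nat.cast_sub h1]
  field_simp
  ring

lemma fejR_expand' (n : ℕ) (B : ℕ) (hB : n ≤ B) (s : ℝ) :
    ((fejR n s : ℝ) : ℂ) = ∑ k ∈ Finset.Icc (-(B:ℤ)) (B:ℤ), fc n k * e1 k s := by
  rw [fejR_expand]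
  apply Finset.sum_subset
  · intro k hk
    simp only [Finset.mem_Icc] at hk ⊢
    omega
  · intro k _ hk
    simp only [Finset.mem_Icc] at hk
    rw [fc_eq_zero (by rw [Int.abs_eq_natAbs]; omega)]
    simp

lemma VkR_expand (n : ℕ) (s : ℝ) :
    ((VkR n s : ℝ) : ℂ) = ∑ k ∈ Finset.Icc (-(2*n:ℤ)) (2*n:ℤ), vc n k * e1 k s := by
  unfold VkR vc
  push_cast
  rw [show ((2*n : ℤ)) = ((2*n : ℕ) : ℤ) by push_cast; ring]
  rw [show ((fejR (2*n) s : ℝ):ℂ) = _ from fejR_expand' (2*n) (2*n) le_rfl s,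
    show ((fejR n s : ℝ):ℂ) = _ from fejR_expand' n (2*n) (by omega) s]
  rw [Finset.mul_sum, ← Finset.sum_sub_distrib]
  exact Finset.sum_congr rfl fun k _ => by ring

lemma MkR_expand (n : ℕ) (s : ℝ) :
    ((MkR n s : ℝ) : ℂ) = ∑ k ∈ Finset.Icc (-(2*n:ℤ)) (2*n:ℤ), mc n k * e1 k s := by
  unfold MkR mc
  push_cast
  rw [show ((2*n : ℤ)) = ((2*n : ℕ) : ℤ) by push_cast; ring]
  rw [show ((fejR (2*n) s : ℝ):ℂ) = _ from fejR_expand' (2*n) (2*n) le_rfl s,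
    show ((fejR n s : ℝ):ℂ) = _ from fejR_expand' n (2*n) (by omega) s]
  rw [Finset.mul_sum, ← Finset.sum_add_distrib]
  exact Finset.sum_congr rfl fun k _ => by ring

/-! ### multivariate kernels -/

/-- multivariate majorant kernel -/
def MKR (N : Fin d → ℕ) (x : Fin d → ℝ) : ℝ := ∏ j, MkR (N j) (x j)

/-- multivariate de la Vallée Poussin kernel -/
def VKR (N : Fin d → ℕ) (x : Fin d → ℝ) : ℝ := ∏ j, VkR (N j) (x j)

def mC (N : Fin d → ℕ) (k : Fin d → ℤ) : ℂ := ∏ j, mc (N j) (k j)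
def vC (N : Fin d → ℕ) (k : Fin d → ℤ) : ℂ := ∏ j, vc (N j) (k j)

lemma MKR_nonneg (N : Fin d → ℕ) (x : Fin d → ℝ) : 0 ≤ MKR N x :=
  Finset.prod_nonneg fun j _ => MkR_nonneg _ _

lemma abs_VKR_le (N : Fin d → ℕ) (x : Fin d → ℝ) : |VKR N x| ≤ MKR N x := by
  unfold VKR MKR
  rw [Finset.abs_prod]
  exact Finset.prod_le_prod (fun j _ => abs_nonneg _) (fun j _ => abs_VkR_le _ _)

lemma continuous_MKR (N : Fin d → ℕ) : Continuous (MKR N) :=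
  continuous_finset_prod _ fun j _ => (continuous_MkR (N j)).comp (continuous_apply j)

lemma continuous_VKR (N : Fin d → ℕ) : Continuous (VKR N) :=
  continuous_finset_prod _ fun j _ => (continuous_VkR (N j)).comp (continuous_apply j)

lemma mC_zero {N : Fin d → ℕ} (hN : ∀ j, 0 < N j) : mC N 0 = 3 ^ d := by
  unfold mC
  simp only [Pi.zero_apply]
  rw [Finset.prod_congr rfl fun j _ => mc_zero (hN j)]
  simp

lemma vC_eq_one {N : Fin d → ℕ} {k : Fin d → ℤ} (hN : ∀ j, 0 < N j)
    (hk : ∀ j, (k j).natAbs ≤ N j) : vC N k = 1 := by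
  unfold vC
  rw [Finset.prod_congr rfl fun j _ => vc_eq_one (hN j) (hk j)]
  simp

lemma piFinset_Icc (a b : Fin d → ℤ) :
    Fintype.piFinset (fun j => Finset.Icc (a j) (b j)) = Finset.Icc a b := by
  ext k
  simp only [Fintype.mem_piFinset, Finset.mem_Icc]
  constructor
  · intro h
    exact ⟨fun j => (h j).1, fun j => (h j).2⟩
  · intro h j
    exact ⟨h.1 j, h.2 j⟩

lemma MKR_expand (N : Fin d → ℕ) (x : Fin d → ℝ) :
    ((MKR N x : ℝ) : ℂ) =
      ∑ k ∈ Finset.Icc (fun j => -(2 * (N j : ℤ))) (fun j => 2 * (N j : ℤ)),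
        mC N k * E k x := by
  unfold MKR
  rw [Complex.ofReal_prod]
  rw [Finset.prod_congr rfl fun j (_ : j ∈ Finset.univ) => MkR_expand (N j) (x j)]
  rw [Finset.prod_univ_sum]
  rw [piFinset_Icc]
  refine Finset.sum_congr rfl fun k _ => ?_
  rw [Finset.prod_mul_distrib, E_eq_prod]
  rfl

lemma VKR_expand (N : Fin d → ℕ) (x : Fin d → ℝ) :
    ((VKR N x : ℝ) : ℂ) =
      ∑ k ∈ Finset.Icc (fun j => -(2 * (N j : ℤ))) (fun j => 2 * (N j : ℤ)),
        vC N k * E k x := by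
  unfold VKR
  rw [Complex.ofReal_prod]
  rw [Finset.prod_congr rfl fun j (_ : j ∈ Finset.univ) => VkR_expand (N j) (x j)]
  rw [Finset.prod_univ_sum]
  rw [piFinset_Icc]
  refine Finset.sum_congr rfl fun k _ => ?_
  rw [Finset.prod_mul_distrib, E_eq_prod]
  rfl

lemma mem_Icc_pi {a b k : Fin d → ℤ} :
    k ∈ Finset.Icc a b ↔ ∀ j, a j ≤ k j ∧ k j ≤ b j := by
  simp only [Finset.mem_Icc, Pi.le_def, ← forall_and]

section Quad

variable {m : ℕ} {N : Fin d → ℕ} {ξ : Fin m → (Fin d → ℝ)} {w : Fin m → ℝ}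

lemma quad
    (H : ∀ g : (Fin d → ℝ) → ℂ, IsTrigPoly (fun j => 3 * N j) g →
      ∑ ν, (w ν : ℂ) * g (ξ ν) =
        (((2 * Real.pi) ^ d : ℝ) : ℂ)⁻¹ * ∫ x in torusCube d, g x)
    {α : Type*} (s : Finset α) (φ : α → ℂ) (κ : α → Fin d → ℤ)
    (hκ : ∀ a ∈ s, κ a ∈ Finset.Icc (fun j => -((3 * N j : ℕ) : ℤ))
      (fun j => ((3 * N j : ℕ) : ℤ))) :
    ∑ ν, (w ν : ℂ) * (∑ a ∈ s, φ a * E (κ a) (ξ ν)) =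
      ∑ a ∈ s.filter (fun a => κ a = 0), φ a := by
  have h := H (fun x => ∑ a ∈ s, φ a * E (κ a) x) (isTrigPoly_sum _ s φ κ hκ)
  have h2 := In_sum (d := d) s φ κ
  unfold In at h2
  exact h.trans h2

variable (hN : ∀ j, 1 ≤ N j)
  (H : ∀ g : (Fin d → ℝ) → ℂ, IsTrigPoly (fun j => 3 * N j) g →
      ∑ ν, (w ν : ℂ) * g (ξ ν) =
        (((2 * Real.pi) ^ d : ℝ) : ℂ)⁻¹ * ∫ x in torusCube d, g x)
include hN H

lemma sum_w_eq_one : ∑ ν, w ν = 1 := by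
  have h := quad H {(0 : Fin d → ℤ)} (fun _ => 1) id ?_
  · rw [Finset.filter_singleton] at h
    simp only [id_eq, if_pos rfl, Finset.sum_singleton, E_zero, mul_one] at h
    norm_num at h
    exact_mod_cast h
  · intro a ha
    rw [Finset.mem_singleton] at ha
    subst ha
    rw [mem_Icc_pi]
    intro j
    simp only [id_eq, Pi.zero_apply]
    omega

lemma quad_M_left (x : Fin d → ℝ) :
    ∑ ν, w ν * MKR N (x - ξ ν) = 3 ^ d := by
  have hκ : ∀ k ∈ Finset.Icc (fun j => -(2 * (N j : ℤ))) (fun j => 2 * (N j : ℤ)),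
      (fun j => -(k j)) ∈ Finset.Icc (fun j => -((3 * N j : ℕ) : ℤ))
        (fun j => ((3 * N j : ℕ) : ℤ)) := by
    intro k hk
    rw [mem_Icc_pi] at hk ⊢
    intro j
    have := hk j
    push_cast
    omega
  have h := quad H (Finset.Icc (fun j => -(2 * (N j : ℤ))) (fun j => 2 * (N j : ℤ)))
    (fun k => mC N k * E k x) (fun k => fun j => -(k j)) hκ
  have hexp : ∀ ν, (((MKR N (x - ξ ν) : ℝ)) : ℂ) =
      ∑ k ∈ Finset.Icc (fun j => -(2 * (N j : ℤ))) (fun j => 2 * (N j : ℤ)),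
        (mC N k * E k x) * E (fun j => -(k j)) (ξ ν) := by
    intro ν
    rw [MKR_expand]
    refine Finset.sum_congr rfl fun k _ => ?_
    show mC N k * E k (x - ξ ν) = mC N k * E k x * E (-k) (ξ ν)
    rw [E_sub k x (ξ ν)]
    ring
  have hfil : (Finset.Icc (fun j => -(2 * (N j : ℤ))) (fun j => 2 * (N j : ℤ))).filter
      (fun k => (fun j => -(k j)) = 0) = {(0 : Fin d → ℤ)} := by
    ext k
    simp only [Finset.mem_filter, Finset.mem_singleton, mem_Icc_pi]
    constructor
    · rintro ⟨-, h2⟩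
      funext j
      have := congrFun h2 j
      simpa using this
    · rintro rfl
      refine ⟨fun j => by simp only [Pi.zero_apply]; omega, ?_⟩
      funext j
      simp
  rw [hfil, Finset.sum_singleton, mC_zero (fun j => hN j), E_zero, mul_one] at h
  have : ∑ ν, (w ν : ℂ) * ((MKR N (x - ξ ν) : ℝ) : ℂ) = ((3:ℂ)) ^ d := by
    rw [Finset.sum_congr rfl fun ν _ => by rw [hexp ν]]
    exact h
  exact_mod_cast this

lemma quad_M_right (y : Fin d → ℝ) :
    ∑ ν, w ν * MKR N (ξ ν - y) = 3 ^ d := by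
  have hκ : ∀ k ∈ Finset.Icc (fun j => -(2 * (N j : ℤ))) (fun j => 2 * (N j : ℤ)),
      k ∈ Finset.Icc (fun j => -((3 * N j : ℕ) : ℤ))
        (fun j => ((3 * N j : ℕ) : ℤ)) := by
    intro k hk
    rw [mem_Icc_pi] at hk ⊢
    intro j
    have := hk j
    push_cast
    omega
  have h := quad H (Finset.Icc (fun j => -(2 * (N j : ℤ))) (fun j => 2 * (N j : ℤ)))
    (fun k => mC N k * E (-k) y) (fun k => k) hκ
  have hexp : ∀ ν, (((MKR N (ξ ν - y) : ℝ)) : ℂ) =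
      ∑ k ∈ Finset.Icc (fun j => -(2 * (N j : ℤ))) (fun j => 2 * (N j : ℤ)),
        (mC N k * E (-k) y) * E k (ξ ν) := by
    intro ν
    rw [MKR_expand]
    refine Finset.sum_congr rfl fun k _ => ?_
    rw [E_sub k (ξ ν) y]
    ring
  have hfil : (Finset.Icc (fun j => -(2 * (N j : ℤ))) (fun j => 2 * (N j : ℤ))).filter
      (fun k => k = 0) = {(0 : Fin d → ℤ)} := by
    ext k
    simp only [Finset.mem_filter, Finset.mem_singleton, mem_Icc_pi]
    constructor
    · rintro ⟨-, h2⟩; exact h2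
    · rintro rfl
      exact ⟨fun j => by simp only [Pi.zero_apply]; omega, rfl⟩
  rw [hfil, Finset.sum_singleton, neg_zero, mC_zero (fun j => hN j), E_zero, mul_one] at h
  have : ∑ ν, (w ν : ℂ) * ((MKR N (ξ ν - y) : ℝ) : ℂ) = ((3:ℂ)) ^ d := by
    rw [Finset.sum_congr rfl fun ν _ => by rw [hexp ν]]
    exact h
  exact_mod_cast this

end Quad

lemma InR_ofReal (g : (Fin d → ℝ) → ℝ) :
    ((InR d g : ℝ) : ℂ) = In d (fun x => ((g x : ℝ) : ℂ)) := by
  unfold In InR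
  rw [show (∫ x in torusCube d, ((g x : ℝ) : ℂ)) = (((∫ x in torusCube d, g x : ℝ)) : ℂ) from
    integral_ofReal]
  push_cast
  ring

section Repro

variable {m : ℕ} {N : Fin d → ℕ} {ξ : Fin m → (Fin d → ℝ)} {w : Fin m → ℝ}
  {c : (Fin d → ℤ) → ℂ} {f : (Fin d → ℝ) → ℂ}

/-- integral of the majorant kernel (left slot) -/
lemma In_M_left (N : Fin d → ℕ) (hN : ∀ j, 1 ≤ N j) (z : Fin d → ℝ) :
    InR d (fun y => MKR N (z - y)) = 3 ^ d := by
  have hexp : (fun y => ((MKR N (z - y) : ℝ) : ℂ)) =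
      fun y => ∑ k ∈ Finset.Icc (fun j => -(2 * (N j : ℤ))) (fun j => 2 * (N j : ℤ)),
        (mC N k * E k z) * E (-k) y := by
    funext y
    rw [MKR_expand]
    refine Finset.sum_congr rfl fun k _ => ?_
    rw [E_sub k z y]
    ring
  have h := In_sum (d := d) (Finset.Icc (fun j => -(2 * (N j : ℤ))) (fun j => 2 * (N j : ℤ)))
    (fun k => mC N k * E k z) (fun k => -k)
  rw [← hexp] at h
  have hfil : (Finset.Icc (fun j => -(2 * (N j : ℤ))) (fun j => 2 * (N j : ℤ))).filter
      (fun k => -k = 0) = {(0 : Fin d → ℤ)} := by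
    ext k
    simp only [Finset.mem_filter, Finset.mem_singleton, mem_Icc_pi, neg_eq_zero]
    constructor
    · rintro ⟨-, h2⟩; exact h2
    · rintro rfl
      exact ⟨fun j => by simp only [Pi.zero_apply]; omega, rfl⟩
  rw [hfil, Finset.sum_singleton, mC_zero (fun j => hN j), E_zero, mul_one] at h
  have h2 := (InR_ofReal (d := d) (fun y => MKR N (z - y))).trans h
  exact_mod_cast h2

/-- integral of the majorant kernel (right slot) -/
lemma In_M_right (N : Fin d → ℕ) (hN : ∀ j, 1 ≤ N j) (z : Fin d → ℝ) :
    InR d (fun x => MKR N (x - z)) = 3 ^ d := by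
  have hexp : (fun x => ((MKR N (x - z) : ℝ) : ℂ)) =
      fun x => ∑ k ∈ Finset.Icc (fun j => -(2 * (N j : ℤ))) (fun j => 2 * (N j : ℤ)),
        (mC N k * E (-k) z) * E k x := by
    funext x
    rw [MKR_expand]
    refine Finset.sum_congr rfl fun k _ => ?_
    rw [E_sub k x z]
    ring
  have h := In_sum (d := d) (Finset.Icc (fun j => -(2 * (N j : ℤ))) (fun j => 2 * (N j : ℤ)))
    (fun k => mC N k * E (-k) z) (fun k => k)
  rw [← hexp] at h
  have hfil : (Finset.Icc (fun j => -(2 * (N j : ℤ))) (fun j => 2 * (N j : ℤ))).filter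
      (fun k => k = 0) = {(0 : Fin d → ℤ)} := by
    ext k
    simp only [Finset.mem_filter, Finset.mem_singleton, mem_Icc_pi]
    constructor
    · rintro ⟨-, h2⟩; exact h2
    · rintro rfl
      exact ⟨fun j => by simp only [Pi.zero_apply]; omega, rfl⟩
  rw [hfil, Finset.sum_singleton, neg_zero, mC_zero (fun j => hN j), E_zero, mul_one] at h
  have h2 := (InR_ofReal (d := d) (fun x => MKR N (x - z))).trans h
  exact_mod_cast h2

variable (hN : ∀ j, 1 ≤ N j)
  (hf : f = fun x => ∑ l ∈ Finset.Icc (fun j => -(N j : ℤ)) (fun j => (N j : ℤ)),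
    c l * E l x)
include hN hf

/-- expansion of `f(ξ') V(x - ξ')` as a trigonometric sum in `ξ'` -/
lemma fV_expand (x ξ' : Fin d → ℝ) :
    f ξ' * ((VKR N (x - ξ') : ℝ) : ℂ) =
      ∑ p ∈ (Finset.Icc (fun j => -(N j : ℤ)) (fun j => (N j : ℤ))) ×ˢ
        (Finset.Icc (fun j => -(2 * (N j : ℤ))) (fun j => 2 * (N j : ℤ))),
        (c p.1 * vC N p.2 * E p.2 x) * E (p.1 - p.2) ξ' := by
  rw [hf]
  rw [VKR_expand]
  rw [Finset.sum_mul_sum]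
  rw [Finset.sum_product]
  refine Finset.sum_congr rfl fun l _ => Finset.sum_congr rfl fun k _ => ?_
  have h1 : E (l - k) ξ' = E l ξ' * E (-k) ξ' := by
    rw [sub_eq_add_neg, ← E_mul]
  have h2 : E k (x - ξ') = E k x * E (-k) ξ' := E_sub k x ξ'
  rw [h1, h2]
  ring

/-- the diagonal value: sum of the zero-frequency coefficients equals `f x` -/
lemma fV_value (x : Fin d → ℝ) :
    ∑ p ∈ ((Finset.Icc (fun j => -(N j : ℤ)) (fun j => (N j : ℤ))) ×ˢ
        (Finset.Icc (fun j => -(2 * (N j : ℤ))) (fun j => 2 * (N j : ℤ)))).filter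
        (fun p => p.1 - p.2 = 0),
      (c p.1 * vC N p.2 * E p.2 x) = f x := by
  have hfil : ((Finset.Icc (fun j => -(N j : ℤ)) (fun j => (N j : ℤ))) ×ˢ
      (Finset.Icc (fun j => -(2 * (N j : ℤ))) (fun j => 2 * (N j : ℤ)))).filter
      (fun p => p.1 - p.2 = 0) =
      (Finset.Icc (fun j => -(N j : ℤ)) (fun j => (N j : ℤ))).image (fun l => (l, l)) := by
    ext p
    simp only [Finset.mem_filter, Finset.mem_product, Finset.mem_image, sub_eq_zero]
    constructor
    · rintro ⟨⟨h1, -⟩, h3⟩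
      exact ⟨p.1, h1, by rw [Prod.ext_iff]; exact ⟨rfl, h3⟩⟩
    · rintro ⟨l, hl, rfl⟩
      rw [mem_Icc_pi] at hl
      dsimp only
      refine ⟨⟨?_, ?_⟩, rfl⟩
      · rw [mem_Icc_pi]; exact hl
      · rw [mem_Icc_pi]
        intro j
        show -(2 * (N j : ℤ)) ≤ l j ∧ l j ≤ 2 * (N j : ℤ)
        have := hl j
        omega
  rw [hfil]
  rw [Finset.sum_image (fun a _ b _ h => (Prod.ext_iff.mp h).1)]
  dsimp only
  rw [hf]
  refine Finset.sum_congr rfl fun l hl => ?_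
  rw [mem_Icc_pi] at hl
  rw [vC_eq_one (fun j => hN j) (fun j => by have := hl j; omega)]
  ring

/-- reproducing property as an integral -/
lemma In_fV (x : Fin d → ℝ) :
    In d (fun ξ' => f ξ' * ((VKR N (x - ξ') : ℝ) : ℂ)) = f x := by
  have h := In_sum (d := d)
    ((Finset.Icc (fun j => -(N j : ℤ)) (fun j => (N j : ℤ))) ×ˢ
      (Finset.Icc (fun j => -(2 * (N j : ℤ))) (fun j => 2 * (N j : ℤ))))
    (fun p => c p.1 * vC N p.2 * E p.2 x) (fun p => p.1 - p.2)
  have hexp : (fun ξ' => f ξ' * ((VKR N (x - ξ') : ℝ) : ℂ)) =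
      fun ξ' => ∑ p ∈ (Finset.Icc (fun j => -(N j : ℤ)) (fun j => (N j : ℤ))) ×ˢ
        (Finset.Icc (fun j => -(2 * (N j : ℤ))) (fun j => 2 * (N j : ℤ))),
        (c p.1 * vC N p.2 * E p.2 x) * E (p.1 - p.2) ξ' :=
    funext fun ξ' => fV_expand hN hf x ξ'
  rw [← hexp] at h
  rw [h]
  exact fV_value hN hf x

/-- reproducing property as a quadrature sum -/
lemma quad_fV
    (H : ∀ g : (Fin d → ℝ) → ℂ, IsTrigPoly (fun j => 3 * N j) g →
      ∑ ν, (w ν : ℂ) * g (ξ ν) =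
        (((2 * Real.pi) ^ d : ℝ) : ℂ)⁻¹ * ∫ x in torusCube d, g x)
    (x : Fin d → ℝ) :
    ∑ ν, (w ν : ℂ) * (f (ξ ν) * ((VKR N (x - ξ ν) : ℝ) : ℂ)) = f x := by
  have hκ : ∀ p ∈ (Finset.Icc (fun j => -(N j : ℤ)) (fun j => (N j : ℤ))) ×ˢ
      (Finset.Icc (fun j => -(2 * (N j : ℤ))) (fun j => 2 * (N j : ℤ))),
      (p.1 - p.2) ∈ Finset.Icc (fun j => -((3 * N j : ℕ) : ℤ))
        (fun j => ((3 * N j : ℕ) : ℤ)) := by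
    intro p hp
    rw [Finset.mem_product] at hp
    have h1 := mem_Icc_pi.mp hp.1
    have h2 := mem_Icc_pi.mp hp.2
    rw [mem_Icc_pi]
    intro j
    have := h1 j
    have := h2 j
    simp only [Pi.sub_apply]
    push_cast
    omega
  have h := quad H ((Finset.Icc (fun j => -(N j : ℤ)) (fun j => (N j : ℤ))) ×ˢ
      (Finset.Icc (fun j => -(2 * (N j : ℤ))) (fun j => 2 * (N j : ℤ))))
    (fun p => c p.1 * vC N p.2 * E p.2 x) (fun p => p.1 - p.2) hκ
  rw [Finset.sum_congr rfl (fun ν _ => by rw [fV_expand hN hf x (ξ ν)])]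
  rw [h]
  exact fV_value hN hf x

end Repro

/-! ### analytic helpers -/

lemma isFiniteMeasure_cube : IsFiniteMeasure (volume.restrict (torusCube d)) := by
  constructor
  rw [Measure.restrict_apply_univ]
  exact isCompact_torusCube.measure_lt_top

lemma memLp_cube {g : (Fin d → ℝ) → ℝ} (hg : Continuous g) (p : ENNReal) :
    MemLp g p (volume.restrict (torusCube d)) := by
  haveI := isFiniteMeasure_cube (d := d)
  obtain ⟨C, hC⟩ := (isCompact_torusCube (d := d)).exists_bound_of_continuousOn
    hg.continuousOn
  exact MemLp.of_bound hg.aestronglyMeasurable C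
    ((ae_restrict_iff' measurableSet_torusCube).mpr (Filter.Eventually.of_forall hC))

lemma InR_nonneg {g : (Fin d → ℝ) → ℝ} (hg : ∀ x, 0 ≤ g x) : 0 ≤ InR d g := by
  unfold InR
  apply mul_nonneg (by positivity)
  exact setIntegral_nonneg measurableSet_torusCube fun x _ => hg x

lemma InR_mono {g h : (Fin d → ℝ) → ℝ} (hg : Continuous g) (hh : Continuous h)
    (hle : ∀ x, g x ≤ h x) : InR d g ≤ InR d h := by
  unfold InR
  apply mul_le_mul_of_nonneg_left _ (by positivity)
  exact setIntegral_mono (integrableOn_continuousR hg) (integrableOn_continuousR hh)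
    fun x => hle x

lemma InR_finset_sum {ι : Type*} (s : Finset ι) (g : ι → (Fin d → ℝ) → ℝ)
    (hg : ∀ i ∈ s, Continuous (g i)) :
    InR d (fun x => ∑ i ∈ s, g i x) = ∑ i ∈ s, InR d (g i) := by
  unfold InR
  rw [MeasureTheory.integral_finset_sum _ (fun i hi => integrableOn_continuousR (hg i hi))]
  rw [Finset.mul_sum]

lemma InR_const_mul (a : ℝ) (g : (Fin d → ℝ) → ℝ) :
    InR d (fun x => a * g x) = a * InR d g := by
  unfold InR
  rw [MeasureTheory.integral_const_mul]
  ring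

/-- discrete Jensen inequality for `x ↦ x^q` -/
lemma jensen_sum {q : ℝ} (hq : 1 ≤ q) {m : ℕ} (p b : Fin m → ℝ)
    (hp : ∀ ν, 0 ≤ p ν) (hb : ∀ ν, 0 ≤ b ν) (hsum : ∑ ν, p ν = 1) :
    (∑ ν, p ν * b ν) ^ q ≤ ∑ ν, p ν * (b ν) ^ q := by
  have h := (convexOn_rpow hq).map_sum_le (t := Finset.univ) (w := p) (p := b)
    (fun ν _ => hp ν) hsum (fun ν _ => hb ν)
  simpa only [smul_eq_mul] using h

/-- Hölder-type inequality for the normalized integral -/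
lemma In_holder {q : ℝ} (hq : 1 < q) {F M : (Fin d → ℝ) → ℝ}
    (hF : Continuous F) (hM : Continuous M)
    (hF0 : ∀ x, 0 ≤ F x) (hM0 : ∀ x, 0 ≤ M x) :
    InR d (fun y => F y * M y) ≤
      (InR d (fun y => F y ^ q * M y)) ^ (1/q) * (InR d M) ^ (1 - 1/q) := by
  set q' : ℝ := q / (q - 1) with hq'def
  have hpq : q.HolderConjugate q' := Real.HolderConjugate.conjExponent hq
  have hq0 : q ≠ 0 := hpq.ne_zero
  have hq'0 : q' ≠ 0 := hpq.symm.ne_zero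
  have hsum1 : 1/q + 1/q' = 1 := by
    rw [one_div, one_div]
    exact hpq.inv_add_inv_eq_one
  have hiq : 1 - 1/q = 1/q' := by linarith
  have hqpos : 0 < q := lt_trans zero_lt_one hq
  have hq'pos : 0 < q' := hpq.symm.pos
  have hAcont : Continuous (fun y => F y * (M y) ^ (1/q)) :=
    hF.mul (hM.rpow_const fun x => Or.inr (one_div_nonneg.mpr hqpos.le))
  have hBcont : Continuous (fun y => (M y) ^ (1/q')) :=
    hM.rpow_const fun x => Or.inr (one_div_nonneg.mpr hq'pos.le)
  have key := MeasureTheory.integral_mul_le_Lp_mul_Lq_of_nonneg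
    (μ := volume.restrict (torusCube d)) hpq
    (f := fun y => F y * (M y) ^ (1/q)) (g := fun y => (M y) ^ (1/q'))
    (Filter.Eventually.of_forall fun y =>
      mul_nonneg (hF0 y) (Real.rpow_nonneg (hM0 y) _))
    (Filter.Eventually.of_forall fun y => Real.rpow_nonneg (hM0 y) _)
    (memLp_cube hAcont _) (memLp_cube hBcont _)
  have hAB : ∀ y, (F y * (M y) ^ (1/q)) * ((M y) ^ (1/q')) = F y * M y := by
    intro y
    rw [mul_assoc, ← Real.rpow_add' (hM0 y) (by rw [hsum1]; norm_num), hsum1, Real.rpow_one]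
  have hAq : ∀ y, (F y * (M y) ^ (1/q)) ^ q = F y ^ q * M y := by
    intro y
    rw [Real.mul_rpow (hF0 y) (Real.rpow_nonneg (hM0 y) _)]
    rw [← Real.rpow_mul (hM0 y), one_div_mul_cancel hq0, Real.rpow_one]
  have hBq : ∀ y, ((M y) ^ (1/q')) ^ q' = M y := by
    intro y
    rw [← Real.rpow_mul (hM0 y), one_div_mul_cancel hq'0, Real.rpow_one]
  simp_rw [hAB, hAq, hBq] at key
  have h1 : 0 ≤ ∫ y in torusCube d, F y ^ q * M y :=
    setIntegral_nonneg measurableSet_torusCube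
      fun y _ => mul_nonneg (Real.rpow_nonneg (hF0 y) q) (hM0 y)
  have h2 : 0 ≤ ∫ y in torusCube d, M y :=
    setIntegral_nonneg measurableSet_torusCube fun y _ => hM0 y
  set cc : ℝ := (((2 * Real.pi) ^ d : ℝ))⁻¹ with hccdef
  have hcc : 0 ≤ cc := by positivity
  have hccsplit : cc ^ (1/q) * cc ^ (1/q') = cc := by
    rw [← Real.rpow_add' hcc (by rw [hsum1]; norm_num), hsum1, Real.rpow_one]
  rw [hiq]
  unfold InR
  calc cc * ∫ y in torusCube d, F y * M y
      ≤ cc * ((∫ y in torusCube d, F y ^ q * M y) ^ (1/q) *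
          (∫ y in torusCube d, M y) ^ (1/q')) := mul_le_mul_of_nonneg_left key hcc
    _ = (cc * ∫ y in torusCube d, F y ^ q * M y) ^ (1/q) *
          (cc * ∫ y in torusCube d, M y) ^ (1/q') := by
        rw [Real.mul_rpow hcc h1, Real.mul_rpow hcc h2, mul_mul_mul_comm, hccsplit]

/-! ### periodization -/

def wrap (x : Fin d → ℝ) : Fin d → ℝ :=
  fun j => x j - 2 * Real.pi * (⌊x j / (2 * Real.pi)⌋ : ℤ)

lemma wrap_mem (x : Fin d → ℝ) : wrap x ∈ torusCube d := by
  intro j _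
  have h2π : (0:ℝ) < 2 * Real.pi := by positivity
  have hw : wrap x j = 2 * Real.pi * Int.fract (x j / (2 * Real.pi)) := by
    unfold wrap Int.fract
    field_simp
  rw [hw]
  constructor
  · have := Int.fract_nonneg (x j / (2 * Real.pi))
    positivity
  · have := (Int.fract_lt_one (x j / (2 * Real.pi))).le
    nlinarith

lemma E_wrap (k : Fin d → ℤ) (x : Fin d → ℝ) : E k (wrap x) = E k x := by
  unfold E
  set K : ℤ := ∑ j, k j * ⌊x j / (2 * Real.pi)⌋ with hK
  have hsum : ((∑ j, (k j : ℝ) * wrap x j : ℝ) : ℂ) =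
      ((∑ j, (k j : ℝ) * x j : ℝ) : ℂ) - (K : ℂ) * (2 * (Real.pi : ℂ)) := by
    unfold wrap
    rw [hK]
    push_cast
    rw [Finset.sum_mul, ← Finset.sum_sub_distrib]
    refine Finset.sum_congr rfl fun j _ => ?_
    ring
  rw [hsum]
  have harg : Complex.I * (((∑ j, (k j : ℝ) * x j : ℝ) : ℂ) - (K : ℂ) * (2 * (Real.pi : ℂ)))
      = Complex.I * ((∑ j, (k j : ℝ) * x j : ℝ) : ℂ) + ((-K : ℤ) : ℂ) * (2 * (Real.pi:ℂ) * Complex.I) := by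
    push_cast
    ring
  rw [harg, Complex.exp_add, Complex.exp_int_mul_two_pi_mul_I, mul_one]

end
end WM

open WM

/-- Weighted Marcinkiewicz-type discretization: if the knots `ξ^ν` and nonnegative weights
`w_ν` integrate exactly every `f ∈ 𝒯(3N)`, then there are constants `C₁(d), C₂(d) > 0`
(depending only on `d`) such that for every `1 ≤ q ≤ ∞` and every `f ∈ 𝒯(N)`,
`C₁(d)‖f‖_q ≤ (Σ_ν w_ν |f(ξ^ν)|^q)^{1/q} ≤ C₂(d)‖f‖_q`; for `q = ∞` the middle quantity
is the max of `|f(ξ^ν)|` over `ν` with `w_ν > 0`. -/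
theorem weighted_marcinkiewicz (d : ℕ) (hd : 1 ≤ d) :
    ∃ C₁ C₂ : ℝ, 0 < C₁ ∧ 0 < C₂ ∧
      ∀ N : Fin d → ℕ, (∀ j, 1 ≤ N j) →
      ∀ (m : ℕ) (ξ : Fin m → (Fin d → ℝ)) (w : Fin m → ℝ), (∀ ν, 0 ≤ w ν) →
      (∀ f : (Fin d → ℝ) → ℂ, IsTrigPoly (fun j => 3 * N j) f →
        ∑ ν, (w ν : ℂ) * f (ξ ν) =
          (((2 * Real.pi) ^ d : ℝ) : ℂ)⁻¹ * ∫ x in torusCube d, f x) →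
      ∀ f : (Fin d → ℝ) → ℂ, IsTrigPoly N f →
        (∀ q : ℝ, 1 ≤ q →
          C₁ * LqNorm d q f ≤ (∑ ν, w ν * ‖f (ξ ν)‖ ^ q) ^ (1 / q) ∧
          (∑ ν, w ν * ‖f (ξ ν)‖ ^ q) ^ (1 / q) ≤ C₂ * LqNorm d q f) ∧
        (C₁ * supNorm d f ≤ sSup {r : ℝ | ∃ ν, 0 < w ν ∧ r = ‖f (ξ ν)‖} ∧
          sSup {r : ℝ | ∃ ν, 0 < w ν ∧ r = ‖f (ξ ν)‖} ≤ C₂ * supNorm d f) := by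
  refine ⟨((3:ℝ)^d)⁻¹, (3:ℝ)^d, by positivity, by positivity, ?_⟩
  intro N hN m ξ w hw H f hfP
  obtain ⟨c, hf⟩ := hfP
  have hfE : f = fun x => ∑ l ∈ Finset.Icc (fun j => -(N j : ℤ)) (fun j => (N j : ℤ)),
      c l * E l x := hf
  clear hf
  set S3 : ℝ := (3:ℝ)^d with hS3def
  have hS3pos : 0 < S3 := by positivity
  have hS3one : 1 ≤ S3 := one_le_pow₀ (by norm_num)
  -- continuity
  have hcf : Continuous f := by
    rw [hfE]; exact continuous_finset_sum _ fun l _ => continuous_const.mul (continuous_E l)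
  have habs : Continuous (fun x => ‖f x‖) := continuous_norm.comp hcf
  have hcontMx : ∀ z, Continuous (fun x : Fin d → ℝ => MKR N (x - z)) := fun z =>
    (continuous_MKR N).comp (continuous_id.sub continuous_const)
  have hcontMy : ∀ z, Continuous (fun y : Fin d → ℝ => MKR N (z - y)) := fun z =>
    (continuous_MKR N).comp (continuous_const.sub continuous_id)
  -- quadrature identities
  have hQ1 : ∑ ν, w ν = 1 := sum_w_eq_one hN H
  have hQ2x : ∀ x, ∑ ν, w ν * MKR N (x - ξ ν) = S3 := quad_M_left hN H
  have hQ2y : ∀ y, ∑ ν, w ν * MKR N (ξ ν - y) = S3 := quad_M_right hN H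
  have hQ3 : ∀ x, ∑ ν, (w ν:ℂ) * (f (ξ ν) * ((VKR N (x - ξ ν) : ℝ):ℂ)) = f x :=
    quad_fV hN hfE H
  have hI3 : ∀ x, In d (fun y => f y * ((VKR N (x - y) : ℝ):ℂ)) = f x := In_fV hN hfE
  have hIM1 : ∀ z, InR d (fun y => MKR N (z - y)) = S3 := In_M_left N hN
  have hIM2 : ∀ z, InR d (fun x => MKR N (x - z)) = S3 := In_M_right N hN
  -- pointwise bound from the reproducing quadrature identity
  have hL1 : ∀ x, ‖f x‖ ≤
      ∑ ν, w ν * ‖f (ξ ν)‖ * MKR N (x - ξ ν) := by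
    intro x
    calc ‖f x‖
        = ‖∑ ν, (w ν:ℂ) * (f (ξ ν) * ((VKR N (x - ξ ν) : ℝ):ℂ))‖ := by
          rw [hQ3 x]
      _ ≤ ∑ ν, ‖(w ν:ℂ) * (f (ξ ν) * ((VKR N (x - ξ ν) : ℝ):ℂ))‖ := norm_sum_le _ _
      _ ≤ ∑ ν, w ν * ‖f (ξ ν)‖ * MKR N (x - ξ ν) := by
          refine Finset.sum_le_sum fun ν _ => ?_
          have h1 : ‖(w ν:ℂ) * (f (ξ ν) * ((VKR N (x - ξ ν) : ℝ):ℂ))‖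
              = w ν * (‖f (ξ ν)‖ * |VKR N (x - ξ ν)|) := by
            rw [norm_mul, norm_mul, Complex.norm_real, Complex.norm_real,
              Real.norm_of_nonneg (hw ν), Real.norm_eq_abs]
          rw [h1, mul_assoc]
          refine mul_le_mul_of_nonneg_left ?_ (hw ν)
          exact mul_le_mul_of_nonneg_left (abs_VKR_le N _) (norm_nonneg _)
  constructor
  · -- finite q
    intro q hq
    have hq0 : (0:ℝ) < q := lt_of_lt_of_le zero_lt_one hq
    have hqne : q ≠ 0 := hq0.ne'
    have hS3q : S3 ^ q = S3 ^ (q-1) * S3 := by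
      rw [← Real.rpow_add_one hS3pos.ne' (q-1), sub_add_cancel]
    set S : ℝ := ∑ ν, w ν * ‖f (ξ ν)‖ ^ q with hSdef
    have hS0 : 0 ≤ S := Finset.sum_nonneg fun ν _ =>
      mul_nonneg (hw ν) (Real.rpow_nonneg (norm_nonneg _) q)
    have hcontabsq : Continuous (fun x => ‖f x‖ ^ q) :=
      habs.rpow_const fun x => Or.inr hq0.le
    set IT : ℝ := InR d (fun x => ‖f x‖ ^ q) with hITdef
    have hIT0 : 0 ≤ IT := InR_nonneg fun x => Real.rpow_nonneg (norm_nonneg _) q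
    have hLq : LqNorm d q f = IT ^ (1/q) := rfl
    have keyroot : ∀ A B : ℝ, 0 ≤ A → 0 ≤ B → A ≤ S3 ^ q * B →
        A ^ (1/q) ≤ S3 * B ^ (1/q) := by
      intro A B hA hB hAB
      have h1 : A ^ (1/q) ≤ (S3 ^ q * B) ^ (1/q) :=
        Real.rpow_le_rpow hA hAB (by positivity)
      have h2 : (S3 ^ q * B) ^ (1/q) = S3 * B ^ (1/q) := by
        rw [Real.mul_rpow (Real.rpow_nonneg hS3pos.le q) hB,
          ← Real.rpow_mul hS3pos.le, mul_one_div_cancel hqne, Real.rpow_one]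
      rw [← h2]; exact h1
    -- lower bound chain
    have hL2 : ∀ x, ‖f x‖ ^ q ≤
        S3 ^ (q - 1) * ∑ ν, w ν * ‖f (ξ ν)‖ ^ q * MKR N (x - ξ ν) := by
      intro x
      set p : Fin m → ℝ := fun ν => w ν * MKR N (x - ξ ν) / S3 with hpdef
      set b : Fin m → ℝ := fun ν => ‖f (ξ ν)‖ with hbdef
      have hp0 : ∀ ν, 0 ≤ p ν := fun ν =>
        div_nonneg (mul_nonneg (hw ν) (MKR_nonneg N _)) hS3pos.le
      have hpsum : ∑ ν, p ν = 1 := by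
        rw [show ∑ ν, p ν = (∑ ν, w ν * MKR N (x - ξ ν)) / S3 from by
          rw [Finset.sum_div]]
        rw [hQ2x x, div_self hS3pos.ne']
      have hj := jensen_sum hq p b hp0 (fun ν => norm_nonneg _) hpsum
      have hsum_pb : ∑ ν, p ν * b ν = (∑ ν, w ν * b ν * MKR N (x - ξ ν)) / S3 := by
        rw [Finset.sum_div]
        exact Finset.sum_congr rfl fun ν _ => by rw [hpdef]; ring
      have hsum_pbq : ∑ ν, p ν * b ν ^ q =
          (∑ ν, w ν * b ν ^ q * MKR N (x - ξ ν)) / S3 := by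
        rw [Finset.sum_div]
        exact Finset.sum_congr rfl fun ν _ => by rw [hpdef]; ring
      calc ‖f x‖ ^ q
          ≤ (∑ ν, w ν * b ν * MKR N (x - ξ ν)) ^ q :=
            Real.rpow_le_rpow (norm_nonneg _) (hL1 x) hq0.le
        _ = (S3 * ∑ ν, p ν * b ν) ^ q := by
            congr 1
            rw [hsum_pb]
            field_simp
        _ = S3 ^ q * (∑ ν, p ν * b ν) ^ q :=
            Real.mul_rpow hS3pos.le
              (Finset.sum_nonneg fun ν _ => mul_nonneg (hp0 ν) (norm_nonneg _))
        _ ≤ S3 ^ q * ∑ ν, p ν * b ν ^ q :=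
            mul_le_mul_of_nonneg_left hj (Real.rpow_nonneg hS3pos.le q)
        _ = S3 ^ (q - 1) * ∑ ν, w ν * b ν ^ q * MKR N (x - ξ ν) := by
            rw [hsum_pbq, hS3q, mul_assoc]
            congr 1
            rw [mul_comm, div_mul_cancel₀ _ hS3pos.ne']
    have hcontRHS : Continuous (fun x =>
        S3 ^ (q-1) * ∑ ν, w ν * ‖f (ξ ν)‖ ^ q * MKR N (x - ξ ν)) :=
      continuous_const.mul (continuous_finset_sum _ fun ν _ =>
        continuous_const.mul (hcontMx (ξ ν)))
    have hlow_fin : IT ≤ S3 ^ q * S := by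
      calc IT ≤ InR d (fun x =>
            S3 ^ (q-1) * ∑ ν, w ν * ‖f (ξ ν)‖ ^ q * MKR N (x - ξ ν)) :=
            InR_mono hcontabsq hcontRHS hL2
        _ = S3 ^ (q-1) * ∑ ν, InR d
            (fun x => w ν * ‖f (ξ ν)‖ ^ q * MKR N (x - ξ ν)) := by
            rw [InR_const_mul]
            rw [InR_finset_sum _ (fun ν x => w ν * ‖f (ξ ν)‖ ^ q * MKR N (x - ξ ν)) (fun ν _ => continuous_const.mul (hcontMx (ξ ν)))]
        _ = S3 ^ (q-1) * ∑ ν, w ν * ‖f (ξ ν)‖ ^ q * S3 := by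
            congr 1
            refine Finset.sum_congr rfl fun ν _ => ?_
            rw [InR_const_mul (w ν * ‖f (ξ ν)‖ ^ q)
              (fun x => MKR N (x - ξ ν)), hIM2 (ξ ν)]
        _ = S3 ^ (q-1) * S3 * S := by
            rw [← Finset.sum_mul, ← hSdef]
            ring
        _ = S3 ^ q * S := by rw [hS3q]
    -- upper bound chain
    have hU1 : ∀ ν, ‖f (ξ ν)‖ ≤
        InR d (fun y => ‖f y‖ * MKR N (ξ ν - y)) := by
      intro ν
      have hVc : Continuous (fun y : Fin d → ℝ => ((VKR N (ξ ν - y) : ℝ) : ℂ)) :=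
        Complex.continuous_ofReal.comp
          ((continuous_VKR N).comp (continuous_const.sub continuous_id))
      calc ‖f (ξ ν)‖
          = ‖In d (fun y => f y * ((VKR N (ξ ν - y) : ℝ):ℂ))‖ := by
            rw [hI3 (ξ ν)]
        _ = ((2 * Real.pi) ^ d)⁻¹ *
            ‖∫ y in torusCube d, f y * ((VKR N (ξ ν - y) : ℝ):ℂ)‖ := by
            unfold In
            rw [norm_mul, norm_inv, Complex.norm_real,
              Real.norm_of_nonneg (twopipow_pos (d := d)).le]
        _ ≤ ((2 * Real.pi) ^ d)⁻¹ *
            ∫ y in torusCube d, ‖f y * ((VKR N (ξ ν - y) : ℝ):ℂ)‖ :=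
            mul_le_mul_of_nonneg_left (norm_integral_le_integral_norm _) (by positivity)
        _ ≤ ((2 * Real.pi) ^ d)⁻¹ *
            ∫ y in torusCube d, ‖f y‖ * MKR N (ξ ν - y) := by
            refine mul_le_mul_of_nonneg_left ?_ (by positivity)
            refine setIntegral_mono ?_ ?_ ?_
            · exact integrableOn_continuousR (hcf.mul hVc).norm
            · exact integrableOn_continuousR (habs.mul (hcontMy (ξ ν)))
            · intro y
              dsimp only
              rw [norm_mul, Complex.norm_real, Real.norm_eq_abs]
              exact mul_le_mul_of_nonneg_left (abs_VKR_le N _) (norm_nonneg _)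
        _ = InR d (fun y => ‖f y‖ * MKR N (ξ ν - y)) := rfl
    have hU2 : ∀ ν, (InR d (fun y => ‖f y‖ * MKR N (ξ ν - y))) ^ q ≤
        S3 ^ (q-1) * InR d (fun y => ‖f y‖ ^ q * MKR N (ξ ν - y)) := by
      intro ν
      rcases eq_or_lt_of_le hq with h1 | h1
      · rw [← h1]
        simp_rw [Real.rpow_one]
        simp
      · have hH := In_holder h1 (F := fun y => ‖f y‖)
          (M := fun y => MKR N (ξ ν - y)) habs (hcontMy (ξ ν))
          (fun y => norm_nonneg _) (fun y => MKR_nonneg N _)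
        rw [hIM1 (ξ ν)] at hH
        have hXnn : 0 ≤ InR d (fun y => ‖f y‖ ^ q * MKR N (ξ ν - y)) :=
          InR_nonneg fun y =>
            mul_nonneg (Real.rpow_nonneg (norm_nonneg _) _) (MKR_nonneg N _)
        have hLnn : 0 ≤ InR d (fun y => ‖f y‖ * MKR N (ξ ν - y)) :=
          InR_nonneg fun y => mul_nonneg (norm_nonneg _) (MKR_nonneg N _)
        calc (InR d (fun y => ‖f y‖ * MKR N (ξ ν - y))) ^ q
            ≤ ((InR d (fun y => ‖f y‖ ^ q * MKR N (ξ ν - y))) ^ (1/q) *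
                S3 ^ (1 - 1/q)) ^ q := Real.rpow_le_rpow hLnn hH hq0.le
          _ = S3 ^ (q-1) * InR d (fun y => ‖f y‖ ^ q * MKR N (ξ ν - y)) := by
              rw [Real.mul_rpow (Real.rpow_nonneg hXnn _) (Real.rpow_nonneg hS3pos.le _),
                ← Real.rpow_mul hXnn, ← Real.rpow_mul hS3pos.le,
                one_div_mul_cancel hqne, Real.rpow_one,
                show (1 - 1/q) * q = q - 1 from by field_simp]
              ring
    have hfin_up : S ≤ S3 ^ q * IT := by
      have hstep : ∀ ν ∈ Finset.univ, w ν * ‖f (ξ ν)‖ ^ q ≤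
          w ν * (S3 ^ (q-1) *
            InR d (fun y => ‖f y‖ ^ q * MKR N (ξ ν - y))) := fun ν _ =>
        mul_le_mul_of_nonneg_left
          (le_trans (Real.rpow_le_rpow (norm_nonneg _) (hU1 ν) hq0.le) (hU2 ν))
          (hw ν)
      calc S ≤ ∑ ν, w ν * (S3 ^ (q-1) *
            InR d (fun y => ‖f y‖ ^ q * MKR N (ξ ν - y))) :=
            Finset.sum_le_sum hstep
        _ = S3 ^ (q-1) * ∑ ν, InR d
            (fun y => w ν * (‖f y‖ ^ q * MKR N (ξ ν - y))) := by
            rw [Finset.mul_sum]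
            refine Finset.sum_congr rfl fun ν _ => ?_
            rw [InR_const_mul (w ν)
              (fun y => ‖f y‖ ^ q * MKR N (ξ ν - y))]
            ring
        _ = S3 ^ (q-1) * InR d
            (fun y => ∑ ν, w ν * (‖f y‖ ^ q * MKR N (ξ ν - y))) := by
            rw [InR_finset_sum _ (fun ν y => w ν * (‖f y‖ ^ q * MKR N (ξ ν - y))) (fun ν _ =>
              continuous_const.mul (hcontabsq.mul (hcontMy (ξ ν))))]
        _ = S3 ^ (q-1) * InR d (fun y => S3 * ‖f y‖ ^ q) := by
            congr 1
            congr 1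
            funext y
            rw [show S3 * ‖f y‖ ^ q = ‖f y‖ ^ q *
              (∑ ν, w ν * MKR N (ξ ν - y)) from by rw [hQ2y y]; ring]
            rw [Finset.mul_sum]
            exact Finset.sum_congr rfl fun ν _ => by ring
        _ = S3 ^ (q-1) * (S3 * IT) := by
            rw [InR_const_mul S3 (fun y => ‖f y‖ ^ q)]
        _ = S3 ^ q * IT := by rw [hS3q]; ring
    constructor
    · rw [hLq]
      have hkr := keyroot IT S hIT0 hS0 hlow_fin
      calc S3⁻¹ * IT ^ (1/q) ≤ S3⁻¹ * (S3 * S ^ (1/q)) :=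
            mul_le_mul_of_nonneg_left hkr (by positivity)
        _ = S ^ (1/q) := by
            rw [← mul_assoc, inv_mul_cancel₀ hS3pos.ne', one_mul]
    · rw [hLq]
      exact keyroot S IT hS0 hIT0 hfin_up
  · -- q = ∞
    set KS : Set ℝ := {r | ∃ ν, 0 < w ν ∧ r = ‖f (ξ ν)‖} with hKSdef
    have hKS_bdd : BddAbove KS := by
      apply Set.Finite.bddAbove
      apply (Set.finite_range (fun ν => ‖f (ξ ν)‖)).subset
      rintro r ⟨ν, -, rfl⟩
      exact ⟨ν, rfl⟩
    obtain ⟨ν₀, hν₀⟩ : ∃ ν, 0 < w ν := by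
      by_contra h
      push_neg at h
      have hz : ∀ ν ∈ Finset.univ, w ν = 0 := fun ν _ => le_antisymm (h ν) (hw ν)
      rw [Finset.sum_congr rfl hz] at hQ1
      simp at hQ1
    have hKS_ne : KS.Nonempty := ⟨_, ν₀, hν₀, rfl⟩
    have hKSnonneg : 0 ≤ sSup KS :=
      le_trans (norm_nonneg (f (ξ ν₀))) (le_csSup hKS_bdd ⟨ν₀, hν₀, rfl⟩)
    have hSNset : {r : ℝ | ∃ x ∈ torusCube d, r = ‖f x‖} =
        (fun x => ‖f x‖) '' torusCube d := by
      ext r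
      simp only [Set.mem_setOf_eq, Set.mem_image]
      constructor
      · rintro ⟨x, hx, rfl⟩; exact ⟨x, hx, rfl⟩
      · rintro ⟨x, hx, rfl⟩; exact ⟨x, hx, rfl⟩
    have hSN_bdd : BddAbove {r : ℝ | ∃ x ∈ torusCube d, r = ‖f x‖} := by
      rw [hSNset]
      exact (isCompact_torusCube.image habs).bddAbove
    have hcube0 : (fun _ => 0 : Fin d → ℝ) ∈ torusCube d := by
      intro j _
      exact ⟨le_refl 0, by positivity⟩
    have hSN_ne : {r : ℝ | ∃ x ∈ torusCube d, r = ‖f x‖}.Nonempty :=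
      ⟨_, ⟨_, hcube0, rfl⟩⟩
    have hSN_ge : ∀ x ∈ torusCube d, ‖f x‖ ≤ supNorm d f := fun x hx =>
      le_csSup hSN_bdd ⟨x, hx, rfl⟩
    have hSN_le : ∀ b, (∀ x ∈ torusCube d, ‖f x‖ ≤ b) → supNorm d f ≤ b :=
      fun b hb => csSup_le hSN_ne (by rintro r ⟨x, hx, rfl⟩; exact hb x hx)
    have hSNnonneg : 0 ≤ supNorm d f :=
      le_trans (norm_nonneg _) (hSN_ge _ hcube0)
    have hf_wrap : ∀ x, f (wrap x) = f x := fun x => by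
      rw [hfE]
      exact Finset.sum_congr rfl fun l _ => by rw [E_wrap]
    have hup : sSup KS ≤ S3 * supNorm d f := by
      apply csSup_le hKS_ne
      rintro r ⟨ν, -, rfl⟩
      calc ‖f (ξ ν)‖ = ‖f (wrap (ξ ν))‖ := by rw [hf_wrap]
        _ ≤ supNorm d f := hSN_ge _ (wrap_mem _)
        _ ≤ S3 * supNorm d f := le_mul_of_one_le_left hSNnonneg hS3one
    have hlow : supNorm d f ≤ S3 * sSup KS := by
      apply hSN_le
      intro x _
      calc ‖f x‖ ≤ ∑ ν, w ν * ‖f (ξ ν)‖ * MKR N (x - ξ ν) := hL1 x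
        _ ≤ ∑ ν, w ν * sSup KS * MKR N (x - ξ ν) := by
            refine Finset.sum_le_sum fun ν _ => ?_
            rcases (hw ν).eq_or_lt with h | h
            · rw [← h]; simp
            · refine mul_le_mul_of_nonneg_right ?_ (MKR_nonneg N _)
              exact mul_le_mul_of_nonneg_left (le_csSup hKS_bdd ⟨ν, h, rfl⟩) (hw ν)
        _ = sSup KS * ∑ ν, w ν * MKR N (x - ξ ν) := by
            rw [Finset.mul_sum]
            exact Finset.sum_congr rfl fun ν _ => by ring
        _ = sSup KS * S3 := by rw [hQ2x x]
        _ = S3 * sSup KS := mul_comm _ _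
    constructor
    · calc ((3:ℝ)^d)⁻¹ * supNorm d f ≤ ((3:ℝ)^d)⁻¹ * (S3 * sSup KS) :=
            mul_le_mul_of_nonneg_left hlow (by positivity)
        _ = sSup KS := by
            rw [hS3def, ← mul_assoc, inv_mul_cancel₀ (by positivity : ((3:ℝ)^d) ≠ 0), one_mul]
    · exact hup
end

section
/- Let N ∈ ℕ^d, let ξ^1,…,ξ^m ∈ 𝕋^d be knots and w_1,…,w_m ≥ 0 be weights such that Σ_{ν=1}^m w_ν f(ξ^ν) = (2π)^{-d} ∫_{𝕋^d} f(x) dx for every trigonometric polynomial f ∈ 𝒯(3N). Then sup_{x ∈ 𝕋^d} Σ_{ν=1}^m w_ν |𝒱_N(x - ξ^ν)| ≤ 3^d. -/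
open MeasureTheory

/-- The univariate Fejér kernel `𝒦_n(x) = Σ_{|k| ≤ n} (1 - |k|/n) e^{ikx}`. -/
noncomputable def fejerKernel (n : ℕ) (x : ℝ) : ℂ :=
  ∑ k ∈ Finset.Icc (-(n : ℤ)) (n : ℤ),
    ((1 - ((|k| : ℤ) : ℝ) / (n : ℝ) : ℝ) : ℂ) * Complex.exp (Complex.I * ((k : ℝ) * x : ℝ))

/-- The univariate de la Vallée Poussin kernel `𝒱_n = 2𝒦_{2n} - 𝒦_n`. -/
noncomputable def dlvpKernel (n : ℕ) (x : ℝ) : ℂ :=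
  2 * fejerKernel (2 * n) x - fejerKernel n x

open Finset

noncomputable def eInt (x : ℝ) (k : ℤ) : ℂ := Complex.exp (Complex.I * (((k : ℝ) * x : ℝ) : ℂ))

lemma eInt_add (x : ℝ) (k l : ℤ) : eInt x (k + l) = eInt x k * eInt x l := by
  unfold eInt
  rw [← Complex.exp_add]
  push_cast
  ring_nf

lemma eInt_zero (x : ℝ) : eInt x 0 = 1 := by simp [eInt]

noncomputable def dirSum (n : ℕ) (x : ℝ) : ℂ := ∑ l ∈ range n, eInt x l

lemma conj_dirSum (n : ℕ) (x : ℝ) : (starRingEnd ℂ) (dirSum n x) = ∑ m ∈ range n, eInt x (-m) := by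
  unfold dirSum
  rw [map_sum]
  refine Finset.sum_congr rfl fun m _ => ?_
  unfold eInt
  rw [← Complex.exp_conj]
  congr 1
  simp [Complex.conj_I]

lemma count_fiber (n : ℕ) (k : ℤ) (hk : k ∈ Icc (-(n : ℤ)) n) :
    (((range n).filter (fun m : ℕ => 0 ≤ (m : ℤ) + k ∧ (m : ℤ) + k < n)).card : ℤ)
      = n - |k| := by
  simp only [mem_Icc] at hk
  have h1 : (range n).filter (fun m : ℕ => 0 ≤ (m : ℤ) + k ∧ (m : ℤ) + k < n)
      = Finset.Ico (-k).toNat ((n - k).toNat ⊓ n) := by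
    ext m
    simp only [mem_filter, mem_range, Finset.mem_Ico, lt_inf_iff]
    omega
  rw [h1, Nat.card_Ico]
  rcases le_or_gt 0 k with h | h
  · rw [abs_of_nonneg h]; omega
  · rw [abs_of_neg h]; omega

lemma fiber_filter (n : ℕ) (m : ℕ) (hm : m < n) :
    (Icc (-(n : ℤ)) n).filter (fun k : ℤ => 0 ≤ (m : ℤ) + k ∧ (m : ℤ) + k < n)
      = (range n).image (fun l : ℕ => (l : ℤ) - m) := by
  ext k
  simp only [mem_filter, mem_Icc, Finset.mem_image, mem_range]
  constructor
  · rintro ⟨⟨h1, h2⟩, h3, h4⟩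
    exact ⟨((m : ℤ) + k).toNat, by omega, by omega⟩
  · rintro ⟨l, hl, rfl⟩
    omega

lemma key_identity (n : ℕ) (x : ℝ) :
    ∑ k ∈ Icc (-(n : ℤ)) n, (((n : ℤ) - |k| : ℤ) : ℂ) * eInt x k
      = dirSum n x * (starRingEnd ℂ) (dirSum n x) := by
  have step1 : ∀ k ∈ Icc (-(n : ℤ)) n,
      (((n : ℤ) - |k| : ℤ) : ℂ) * eInt x k
        = ∑ m ∈ range n, (if 0 ≤ (m : ℤ) + k ∧ (m : ℤ) + k < n then eInt x k else 0) := by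
    intro k hk
    rw [Finset.sum_ite, Finset.sum_const, Finset.sum_const_zero, add_zero, nsmul_eq_mul]
    congr 1
    have := count_fiber n k hk
    push_cast [← this]
    norm_cast
  rw [Finset.sum_congr rfl step1, Finset.sum_comm]
  have step2 : ∀ m ∈ range n,
      (∑ k ∈ Icc (-(n : ℤ)) n, if 0 ≤ (m : ℤ) + k ∧ (m : ℤ) + k < n then eInt x k else 0)
        = ∑ l ∈ range n, eInt x ((l : ℤ) - m) := by
    intro m hm
    rw [← Finset.sum_filter, fiber_filter n m (mem_range.mp hm), Finset.sum_image]
    intro a _ b _ h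
    simpa using h
  rw [Finset.sum_congr rfl step2, Finset.sum_comm, conj_dirSum, dirSum, Finset.sum_mul]
  refine Finset.sum_congr rfl fun l _ => ?_
  rw [Finset.mul_sum]
  refine Finset.sum_congr rfl fun m _ => ?_
  rw [← eInt_add, sub_eq_add_neg]

noncomputable def fejerReal (n : ℕ) (x : ℝ) : ℝ := Complex.normSq (dirSum n x) / n

lemma fejerReal_nonneg (n : ℕ) (x : ℝ) : 0 ≤ fejerReal n x :=
  div_nonneg (Complex.normSq_nonneg _) (Nat.cast_nonneg n)

lemma fejer_eq_real (n : ℕ) (hn : 1 ≤ n) (x : ℝ) :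
    fejerKernel n x = ((fejerReal n x : ℝ) : ℂ) := by
  have hn' : (n : ℝ) ≠ 0 := by positivity
  have hc : (n : ℂ) ≠ 0 := by exact_mod_cast hn'
  have key : (n : ℂ) * fejerKernel n x
      = ∑ k ∈ Icc (-(n : ℤ)) n, (((n : ℤ) - |k| : ℤ) : ℂ) * eInt x k := by
    rw [fejerKernel, Finset.mul_sum]
    refine Finset.sum_congr rfl fun k _ => ?_
    show (n : ℂ) * (((1 - ((|k| : ℤ) : ℝ) / (n : ℝ) : ℝ) : ℂ) * eInt x k) = _
    rw [← mul_assoc]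
    congr 1
    push_cast [Int.cast_abs]
    field_simp
    norm_cast
  have h2 : (n : ℂ) * fejerKernel n x = ((Complex.normSq (dirSum n x) : ℝ) : ℂ) := by
    rw [key, key_identity, Complex.mul_conj]
  rw [fejerReal]
  rw [Complex.ofReal_div, Complex.ofReal_natCast, eq_div_iff hc]
  rw [mul_comm] at h2
  exact_mod_cast h2

noncomputable def coefF (n : ℕ) (k : ℤ) : ℝ :=
  if |k| ≤ (n : ℤ) then 1 - ((|k| : ℤ) : ℝ) / (n : ℝ) else 0

lemma fejer_extend (n M : ℕ) (h : n ≤ M) (x : ℝ) :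
    fejerKernel n x = ∑ k ∈ Icc (-(M : ℤ)) M, ((coefF n k : ℝ) : ℂ) * eInt x k := by
  have h1 : fejerKernel n x = ∑ k ∈ Icc (-(n : ℤ)) n, ((coefF n k : ℝ) : ℂ) * eInt x k := by
    rw [fejerKernel]
    refine Finset.sum_congr rfl fun k hk => ?_
    rw [mem_Icc] at hk
    rw [coefF, if_pos (abs_le.mpr hk)]
    rfl
  rw [h1]
  refine Finset.sum_subset (Finset.Icc_subset_Icc (by omega) (by exact_mod_cast h)) fun k _ hk => ?_
  rw [mem_Icc, not_and_or, not_le, not_le] at hk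
  have hne : ¬ |k| ≤ (n : ℤ) := by rw [abs]; omega
  rw [coefF, if_neg hne]
  simp

noncomputable def vpCoef (n : ℕ) (k : ℤ) : ℝ := 2 * coefF (2 * n) k + coefF n k

lemma eInt_sub (x t : ℝ) (k : ℤ) : eInt (x - t) k = eInt x k * eInt t (-k) := by
  unfold eInt
  rw [← Complex.exp_add]
  congr 1
  push_cast
  ring

lemma vp_expand (n : ℕ) (x t : ℝ) :
    2 * fejerKernel (2 * n) (x - t) + fejerKernel n (x - t)
      = ∑ k ∈ Icc (-(3 * n : ℕ) : ℤ) ((3 * n : ℕ) : ℤ),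
          ((vpCoef n (-k) : ℝ) : ℂ) * eInt x (-k) * eInt t k := by
  rw [fejer_extend (2 * n) (3 * n) (by omega) (x - t), fejer_extend n (3 * n) (by omega) (x - t),
    Finset.mul_sum, ← Finset.sum_add_distrib]
  refine Finset.sum_nbij' (fun k => -k) (fun k => -k) ?_ ?_ ?_ ?_ ?_
  · intro a ha; simp only [mem_Icc] at ha ⊢; omega
  · intro a ha; simp only [mem_Icc] at ha ⊢; omega
  · intro a _; ring
  · intro a _; ring
  · intro k _
    rw [neg_neg, eInt_sub x t k, vpCoef]
    push_cast
    ring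

lemma eInt_continuous (k : ℤ) : Continuous fun t : ℝ => eInt t k := by
  unfold eInt
  fun_prop

lemma integral_eInt (k : ℤ) :
    ∫ t in Set.Icc (0 : ℝ) (2 * Real.pi), eInt t k
      = if k = 0 then ((2 * Real.pi : ℝ) : ℂ) else 0 := by
  have hpi : (0 : ℝ) ≤ 2 * Real.pi := by positivity
  rcases eq_or_ne k 0 with rfl | hk
  · simp only [eInt, if_pos rfl]
    push_cast
    simp [Complex.exp_zero, Real.volume_Icc, hpi, Real.pi_nonneg]
  · rw [if_neg hk]
    have hik : Complex.I * (k : ℂ) ≠ 0 := by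
      apply mul_ne_zero Complex.I_ne_zero
      exact_mod_cast hk
    have he : ∀ t : ℝ, eInt t k = Complex.exp ((Complex.I * (k : ℂ)) * (t : ℂ)) := by
      intro t
      unfold eInt
      congr 1
      push_cast
      ring
    rw [MeasureTheory.integral_Icc_eq_integral_Ioc,
      ← intervalIntegral.integral_of_le hpi]
    simp_rw [he]
    rw [integral_exp_mul_complex hik]
    have h1 : Complex.I * (k : ℂ) * ((2 * Real.pi : ℝ) : ℂ) = (k : ℂ) * (2 * (Real.pi : ℂ) * Complex.I) := by
      push_cast; ring
    rw [h1, Complex.exp_int_mul_two_pi_mul_I]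
    simp

lemma integrableOn_eInt (k : ℤ) :
    MeasureTheory.IntegrableOn (fun t => eInt t k) (Set.Icc (0 : ℝ) (2 * Real.pi)) :=
  (eInt_continuous k).integrableOn_Icc

lemma integral_vp (n : ℕ) (x : ℝ) :
    ∫ t in Set.Icc (0 : ℝ) (2 * Real.pi),
        (2 * fejerKernel (2 * n) (x - t) + fejerKernel n (x - t))
      = 3 * ((2 * Real.pi : ℝ) : ℂ) := by
  have hfun : (fun t : ℝ => 2 * fejerKernel (2 * n) (x - t) + fejerKernel n (x - t))
      = fun t => ∑ k ∈ Icc (-(3 * n : ℕ) : ℤ) ((3 * n : ℕ) : ℤ),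
          ((vpCoef n (-k) : ℝ) : ℂ) * eInt x (-k) * eInt t k := by
    funext t
    exact vp_expand n x t
  rw [hfun, MeasureTheory.integral_finset_sum]
  · have h1 : ∀ k ∈ Icc (-(3 * n : ℕ) : ℤ) ((3 * n : ℕ) : ℤ),
        (∫ t in Set.Icc (0 : ℝ) (2 * Real.pi),
          ((vpCoef n (-k) : ℝ) : ℂ) * eInt x (-k) * eInt t k)
        = ((vpCoef n (-k) : ℝ) : ℂ) * eInt x (-k) * (if k = 0 then ((2 * Real.pi : ℝ) : ℂ) else 0) := by
      intro k _
      rw [MeasureTheory.integral_const_mul, integral_eInt]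
    rw [Finset.sum_congr rfl h1,
      Finset.sum_eq_single 0 (fun k _ hk => by rw [if_neg hk, mul_zero])
        (fun h => absurd (by simp only [mem_Icc]; omega : (0:ℤ) ∈ Icc (-(3 * n : ℕ) : ℤ) ((3 * n : ℕ) : ℤ)) h)]
    have h0 : vpCoef n 0 = 3 := by
      unfold vpCoef coefF
      norm_num
    rw [if_pos rfl, neg_zero, h0, eInt_zero]
    push_cast
    ring
  · intro k _
    exact (integrableOn_eInt k).const_mul _

noncomputable def vpMaj (n : ℕ) (u : ℝ) : ℝ := 2 * fejerReal (2 * n) u + fejerReal n u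

lemma vpMaj_nonneg (n : ℕ) (u : ℝ) : 0 ≤ vpMaj n u := by
  have a := fejerReal_nonneg (2 * n) u
  have b := fejerReal_nonneg n u
  unfold vpMaj
  linarith

lemma vpMaj_eq (n : ℕ) (hn : 1 ≤ n) (u : ℝ) :
    ((vpMaj n u : ℝ) : ℂ) = 2 * fejerKernel (2 * n) u + fejerKernel n u := by
  rw [fejer_eq_real (2 * n) (by omega), fejer_eq_real n hn, vpMaj]
  push_cast
  ring

lemma abs_dlvp_le (n : ℕ) (hn : 1 ≤ n) (u : ℝ) :
    ‖dlvpKernel n u‖ ≤ vpMaj n u := by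
  have h1 : dlvpKernel n u = (((2 * fejerReal (2 * n) u - fejerReal n u : ℝ)) : ℂ) := by
    rw [dlvpKernel, fejer_eq_real (2 * n) (by omega), fejer_eq_real n hn]
    push_cast
    ring
  rw [h1, Complex.norm_real, Real.norm_eq_abs, vpMaj]
  have a := fejerReal_nonneg (2 * n) u
  have b := fejerReal_nonneg n u
  exact abs_le.mpr ⟨by linarith, by linarith⟩

lemma isTrigPoly_maj (d : ℕ) (N : Fin d → ℕ) (hN : ∀ j, 1 ≤ N j) (x : Fin d → ℝ) :
    IsTrigPoly (fun j => 3 * N j)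
      (fun y => ∏ j, ((vpMaj (N j) (x j - y j) : ℝ) : ℂ)) := by
  refine ⟨fun k => ∏ j, ((vpCoef (N j) (-(k j)) : ℝ) : ℂ) * eInt (x j) (-(k j)), ?_⟩
  funext y
  have h1 : ∀ j : Fin d, ((vpMaj (N j) (x j - y j) : ℝ) : ℂ)
      = ∑ k ∈ Icc (-(3 * N j : ℕ) : ℤ) ((3 * N j : ℕ) : ℤ),
          ((vpCoef (N j) (-k) : ℝ) : ℂ) * eInt (x j) (-k) * eInt (y j) k := by
    intro j
    rw [vpMaj_eq (N j) (hN j)]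
    exact vp_expand (N j) (x j) (y j)
  show ∏ j, ((vpMaj (N j) (x j - y j) : ℝ) : ℂ) = _
  rw [Finset.prod_congr rfl fun j _ => h1 j, Finset.prod_univ_sum]
  rw [show Finset.Icc (fun j => -((3 * N j : ℕ) : ℤ)) (fun j => ((3 * N j : ℕ) : ℤ))
      = Fintype.piFinset (fun j => Finset.Icc (-((3 * N j : ℕ) : ℤ)) ((3 * N j : ℕ) : ℤ)) from
    Pi.Icc_eq _ _]
  refine Finset.sum_congr rfl fun p _ => ?_
  rw [Finset.prod_mul_distrib]
  congr 1
  show ∏ j, eInt (y j) (p j) = _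
  have h2 : ∏ j, eInt (y j) (p j)
      = Complex.exp (∑ j, Complex.I * (((p j : ℝ) * y j : ℝ) : ℂ)) :=
    (Complex.exp_sum _ _).symm
  rw [h2]
  congr 1
  rw [← Finset.mul_sum]
  congr 1
  push_cast
  rfl

lemma integral_maj (d : ℕ) (N : Fin d → ℕ) (hN : ∀ j, 1 ≤ N j) (x : Fin d → ℝ) :
    (∫ y in torusCube d, ∏ j, ((vpMaj (N j) (x j - y j) : ℝ) : ℂ))
      = (3 * ((2 * Real.pi : ℝ) : ℂ)) ^ d := by
  unfold torusCube
  rw [← MeasureTheory.integral_indicator (MeasurableSet.univ_pi fun _ => measurableSet_Icc)]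
  have hind : (Set.univ.pi fun _ : Fin d => Set.Icc (0 : ℝ) (2 * Real.pi)).indicator (fun y => ∏ j, ((vpMaj (N j) (x j - y j) : ℝ) : ℂ))
      = fun y => ∏ j, (Set.Icc (0 : ℝ) (2 * Real.pi)).indicator
          (fun t => ((vpMaj (N j) (x j - t) : ℝ) : ℂ)) (y j) := by
    funext y
    by_cases hy : y ∈ Set.univ.pi fun _ : Fin d => Set.Icc (0 : ℝ) (2 * Real.pi)
    · rw [Set.indicator_of_mem hy]
      exact Finset.prod_congr rfl fun j _ =>
        (Set.indicator_of_mem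
          (show y j ∈ Set.Icc (0 : ℝ) (2 * Real.pi) from hy j (Set.mem_univ j))
          (fun t => ((vpMaj (N j) (x j - t) : ℝ) : ℂ))).symm
    · rw [Set.indicator_of_notMem hy]
      rw [Set.mem_pi] at hy
      push_neg at hy
      obtain ⟨j, _, hj⟩ := hy
      exact (Finset.prod_eq_zero (Finset.mem_univ j) (Set.indicator_of_notMem hj _)).symm
  rw [hind, MeasureTheory.integral_fintype_prod_volume_eq_prod]
  have hone : ∀ j : Fin d,
      (∫ t : ℝ, (Set.Icc (0 : ℝ) (2 * Real.pi)).indicator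
        (fun t => ((vpMaj (N j) (x j - t) : ℝ) : ℂ)) t) = 3 * ((2 * Real.pi : ℝ) : ℂ) := by
    intro j
    rw [MeasureTheory.integral_indicator measurableSet_Icc]
    simp_rw [vpMaj_eq (N j) (hN j)]
    exact integral_vp (N j) (x j)
  rw [Finset.prod_congr rfl fun j _ => hone j, Finset.prod_const, Finset.card_univ,
    Fintype.card_fin]

/-- If the knots `ξ^ν ∈ 𝕋^d` and nonnegative weights `w_ν` integrate exactly every
trigonometric polynomial `f ∈ 𝒯(3N)`, then
`sup_{x ∈ 𝕋^d} Σ_ν w_ν |𝒱_N(x - ξ^ν)| ≤ 3^d`, where `𝒱_N(x) = ∏_j 𝒱_{N_j}(x_j)`. -/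
theorem dlvp_weighted_sum_bound (d : ℕ) (hd : 1 ≤ d) (N : Fin d → ℕ) (hN : ∀ j, 1 ≤ N j)
    (m : ℕ) (ξ : Fin m → (Fin d → ℝ)) (w : Fin m → ℝ) (hw : ∀ ν, 0 ≤ w ν)
    (hquad : ∀ f : (Fin d → ℝ) → ℂ, IsTrigPoly (fun j => 3 * N j) f →
      ∑ ν, (w ν : ℂ) * f (ξ ν) =
        (((2 * Real.pi) ^ d : ℝ) : ℂ)⁻¹ * ∫ x in torusCube d, f x) :
    ∀ x : Fin d → ℝ,
      ∑ ν, w ν * ‖∏ j, dlvpKernel (N j) (x j - ξ ν j)‖ ≤ 3 ^ d := by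
  intro x
  have habs : ∀ ν, ‖∏ j, dlvpKernel (N j) (x j - ξ ν j)‖
      ≤ ∏ j, vpMaj (N j) (x j - ξ ν j) := by
    intro ν
    rw [norm_prod]
    exact Finset.prod_le_prod (fun j _ => norm_nonneg _)
      (fun j _ => abs_dlvp_le (N j) (hN j) _)
  have hsum : ∑ ν, w ν * ∏ j, vpMaj (N j) (x j - ξ ν j) = 3 ^ d := by
    have hq := hquad _ (isTrigPoly_maj d N hN x)
    rw [integral_maj d N hN x] at hq
    have hL : ∑ ν, (w ν : ℂ) * (fun y => ∏ j, ((vpMaj (N j) (x j - y j) : ℝ) : ℂ)) (ξ ν)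
        = ((∑ ν, w ν * ∏ j, vpMaj (N j) (x j - ξ ν j) : ℝ) : ℂ) := by
      push_cast
      rfl
    rw [hL] at hq
    have hpi : ((2 * Real.pi : ℝ) : ℂ) ≠ 0 := by
      have : (2 * Real.pi : ℝ) ≠ 0 := by positivity
      exact_mod_cast this
    have hR : (((2 * Real.pi) ^ d : ℝ) : ℂ)⁻¹ * (3 * ((2 * Real.pi : ℝ) : ℂ)) ^ d
        = ((3 ^ d : ℝ) : ℂ) := by
      have h1 : (((2 * Real.pi) ^ d : ℝ) : ℂ) = ((2 * Real.pi : ℝ) : ℂ) ^ d := by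
        push_cast; rfl
      rw [h1, mul_pow, mul_comm ((3 : ℂ) ^ d), ← mul_assoc,
        inv_mul_cancel₀ (pow_ne_zero d hpi), one_mul]
      norm_cast
    rw [hR] at hq
    exact_mod_cast hq
  calc ∑ ν, w ν * ‖∏ j, dlvpKernel (N j) (x j - ξ ν j)‖
      ≤ ∑ ν, w ν * ∏ j, vpMaj (N j) (x j - ξ ν j) :=
        Finset.sum_le_sum fun ν _ => mul_le_mul_of_nonneg_left (habs ν) (hw ν)
    _ = 3 ^ d := hsum
end
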